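/- Let H be the digraph with vertex set {1,2,3,4,5} and arc set {12, 23, 34, 41, 15, 35} (a copy of H*). Given a digraph D, let D' be the digraph obtained from D by replacing every arc uv of D with the gadget on vertices v_1, v_2, v_3, v_4, v_5, v_6, v_7, where v_6 = u and v_7 = v and v_1,…,v_5 are new vertices (distinct for different arcs), with arcs {v_1v_2, v_2v_3, v_3v_4, v_4v_1, v_5v_6, v_5v_7, v_1v_6, v_3v_7} (so D' has no arcs between vertices of D). Define costs on D': for every t ∈ V(D), c_4(t) = 0 and c_1(t) = c_2(t) = c_3(t) = c_5(t) = 1; all costs of the gadget vertices v_1,…,v_5 are 0. Then a homomorphism of D' to H exists, and the minimum cost of a homomorphism of D' to H equals |V(D)| − α(D). -/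
import Mathlib


namespace MinHomHstar

/-- the target digraph: vertices 1,…,5 (as 0,…,4 : Fin 5) and arcs
{12, 23, 34, 41, 15, 35}; a copy of H*. -/
def HArc : Fin 5 → Fin 5 → Prop := fun a b =>
  (a, b) ∈ ([(0,1),(1,2),(2,3),(3,0),(0,4),(2,4)] : List (Fin 5 × Fin 5))

/-- vertex set of D': the vertices of D together with five gadget vertices
v_1,…,v_5 (as (e,0),…,(e,4)) for every arc e = uv of D; v_6 = u, v_7 = v. -/
abbrev GV (α : Type*) (Ad : α → α → Prop) : Type _ :=
  α ⊕ ({p : α × α // Ad p.1 p.2} × Fin 5)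

/-- arcs of D': for each arc e = uv of D the gadget arcs
{v₁v₂, v₂v₃, v₃v₄, v₄v₁, v₅v₆, v₅v₇, v₁v₆, v₃v₇} with v₆ = u, v₇ = v. -/
def GArc {α : Type*} (Ad : α → α → Prop) : GV α Ad → GV α Ad → Prop
  | Sum.inr (e, i), Sum.inr (e', i') =>
      e = e' ∧ ((i, i') ∈ ([(0,1),(1,2),(2,3),(3,0)] : List (Fin 5 × Fin 5)))
  | Sum.inr (e, i), Sum.inl w =>
      (i = 4 ∧ w = e.1.1) ∨ (i = 4 ∧ w = e.1.2) ∨ (i = 0 ∧ w = e.1.1) ∨ (i = 2 ∧ w = e.1.2)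
  | _, _ => False

/-- costs: c_4(t) = 0 and c_1(t) = c_2(t) = c_3(t) = c_5(t) = 1 for t ∈ V(D)
(vertex 4 is index 3 : Fin 5); all costs of gadget vertices are 0. -/
def cost {α : Type*} (Ad : α → α → Prop) : Fin 5 → GV α Ad → ℕ
  | h, Sum.inl _ => if h = 3 then 0 else 1
  | _, Sum.inr _ => 0

instance : DecidableRel HArc := fun a b => by unfold HArc; infer_instance

/-- In H, no 4-cycle a→b→c→d→a can have both a→3 and c→3 (while some vertex g→3 exists). -/
lemma key : ∀ a b c d g : Fin 5, HArc a b → HArc b c → HArc c d → HArc d a →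
    HArc g 3 → HArc a 3 → HArc c 3 → False := by decide

lemma gadS_hom : ∀ i i' : Fin 5,
    (i,i') ∈ ([(0,1),(1,2),(2,3),(3,0)] : List (Fin 5 × Fin 5)) →
    HArc (![2,3,0,1,2] i) (![2,3,0,1,2] i') := by decide

lemma gadN_hom : ∀ i i' : Fin 5,
    (i,i') ∈ ([(0,1),(1,2),(2,3),(3,0)] : List (Fin 5 × Fin 5)) →
    HArc (![0,1,2,3,2] i) (![0,1,2,3,2] i') := by decide

section
variable {α : Type*} [Fintype α] [DecidableEq α] (Ad : α → α → Prop) [DecidableRel Ad]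

/-- the homomorphism determined by an independent set S:
vertices of S go to 3, other vertices of D go to 4, and the gadget for an arc uv
is mapped by ![2,3,0,1,2] if u ∈ S and by ![0,1,2,3,2] otherwise. -/
def homOf (S : Finset α) : GV α Ad → Fin 5
  | Sum.inl t => if t ∈ S then 3 else 4
  | Sum.inr (e, i) => if e.1.1 ∈ S then ![2,3,0,1,2] i else ![0,1,2,3,2] i

set_option linter.unusedSectionVars false in
lemma homOf_isHom (hirr : Irreflexive Ad) (S : Finset α)
    (hS : ∀ a ∈ S, ∀ b ∈ S, a ≠ b → ¬ Ad a b) :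
    ∀ x y, GArc Ad x y → HArc (homOf Ad S x) (homOf Ad S y) := by
  rintro (t | ⟨e, i⟩) (w | ⟨e', i'⟩) h
  · exact absurd h not_false
  · exact absurd h not_false
  · -- gadget-to-D arcs
    rcases h with ⟨rfl, rfl⟩ | ⟨rfl, rfl⟩ | ⟨rfl, rfl⟩ | ⟨rfl, rfl⟩
    · simp only [homOf]; split_ifs <;> decide
    · simp only [homOf]; split_ifs <;> decide
    · simp only [homOf]
      split_ifs with h1 <;> simp [h1] <;> decide
    · simp only [homOf]
      have hne : e.1.1 ≠ e.1.2 := fun hee => hirr e.1.1 (hee ▸ e.2)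
      split_ifs with h1 h2 h2
      · exact absurd e.2 (hS _ h1 _ h2 hne)
      · decide
      · decide
      · decide
  · -- arcs inside a gadget
    obtain ⟨rfl, hm⟩ := h
    simp only [homOf]
    split_ifs with h1
    · exact gadS_hom _ _ hm
    · exact gadN_hom _ _ hm

set_option linter.unusedSectionVars false in
/-- the cost of any map is the number of vertices of D not mapped to 3. -/
lemma sum_cost (f : GV α Ad → Fin 5) :
    (∑ w, cost Ad (f w) w) =
      Fintype.card α - (Finset.univ.filter fun t => f (Sum.inl t) = 3).card := by
  classical
  rw [Fintype.sum_sum_type]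
  have h2 : ∀ p : {p : α × α // Ad p.1 p.2} × Fin 5,
      cost Ad (f (Sum.inr p)) (Sum.inr p) = 0 := fun p => rfl
  simp only [h2, Finset.sum_const_zero, add_zero]
  have h1 : ∀ t : α, cost Ad (f (Sum.inl t)) (Sum.inl t) =
      if ¬ (f (Sum.inl t) = 3) then 1 else 0 := by
    intro t
    by_cases h : f (Sum.inl t) = 3 <;> simp [cost, h]
  simp only [h1]
  rw [← Finset.card_filter]
  have := Finset.card_filter_add_card_filter_not
    (s := (Finset.univ : Finset α)) (p := fun t => f (Sum.inl t) = 3)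
  rw [Finset.card_univ] at this
  omega

end

/-- Lemma 4.3: a homomorphism of D' to H exists, and the minimum cost of a homomorphism
of D' to H equals |V(D)| − α(D). -/
theorem stmt15 {α : Type*} [Fintype α] [DecidableEq α]
    (Ad : α → α → Prop) [DecidableRel Ad] (hirr : Irreflexive Ad) :
    ∃ m : ℕ,
      IsGreatest {n : ℕ | ∃ S : Finset α,
        (∀ a ∈ S, ∀ b ∈ S, a ≠ b → ¬ Ad a b) ∧ S.card = n} m ∧
      (∃ f : GV α Ad → Fin 5, ∀ x y, GArc Ad x y → HArc (f x) (f y)) ∧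
      IsLeast {n : ℕ | ∃ f : GV α Ad → Fin 5,
          (∀ x y, GArc Ad x y → HArc (f x) (f y)) ∧ (∑ w, cost Ad (f w) w) = n}
        (Fintype.card α - m) := by
  classical
  set P : ℕ → Prop := fun n => ∃ S : Finset α,
    (∀ a ∈ S, ∀ b ∈ S, a ≠ b → ¬ Ad a b) ∧ S.card = n with hP
  have hP0 : P 0 := ⟨∅, by simp⟩
  set m := Nat.findGreatest P (Fintype.card α) with hm
  have hPm : P m := Nat.findGreatest_spec (Nat.zero_le _) hP0
  have hub : ∀ n ∈ {n : ℕ | P n}, n ≤ m := by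
    rintro n ⟨S, hS, rfl⟩
    exact Nat.le_findGreatest (Finset.card_le_univ S) ⟨S, hS, rfl⟩
  obtain ⟨S, hS, hScard⟩ := hPm
  refine ⟨m, ⟨⟨S, hS, hScard⟩, hub⟩, ⟨homOf Ad S, homOf_isHom Ad hirr S hS⟩, ?_, ?_⟩
  · -- the homomorphism from a maximum independent set achieves cost |V(D)| − m
    refine ⟨homOf Ad S, homOf_isHom Ad hirr S hS, ?_⟩
    rw [sum_cost]
    congr 1
    rw [← hScard]
    congr 1
    ext t
    simp only [Finset.mem_filter, Finset.mem_univ, true_and, homOf]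
    by_cases h : t ∈ S <;> simp [h]
  · -- lower bound: vertices mapped to 3 form an independent set
    rintro n ⟨f, hf, rfl⟩
    rw [sum_cost]
    have hT : (Finset.univ.filter fun t => f (Sum.inl t) = 3).card ≤ m := by
      apply hub
      refine ⟨_, ?_, rfl⟩
      intro a ha b hb hne hab
      simp only [Finset.mem_filter, Finset.mem_univ, true_and] at ha hb
      set e : {p : α × α // Ad p.1 p.2} := ⟨(a, b), hab⟩ with he
      have harc01 := hf (Sum.inr (e, 0)) (Sum.inr (e, 1)) ⟨rfl, by decide⟩
      have harc12 := hf (Sum.inr (e, 1)) (Sum.inr (e, 2)) ⟨rfl, by decide⟩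
      have harc23 := hf (Sum.inr (e, 2)) (Sum.inr (e, 3)) ⟨rfl, by decide⟩
      have harc30 := hf (Sum.inr (e, 3)) (Sum.inr (e, 0)) ⟨rfl, by decide⟩
      have harcg := hf (Sum.inr (e, 4)) (Sum.inl a) (Or.inl ⟨rfl, rfl⟩)
      have harca := hf (Sum.inr (e, 0)) (Sum.inl a) (Or.inr (Or.inr (Or.inl ⟨rfl, rfl⟩)))
      have harcc := hf (Sum.inr (e, 2)) (Sum.inl b) (Or.inr (Or.inr (Or.inr ⟨rfl, rfl⟩)))
      rw [ha] at harcg harca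
      rw [hb] at harcc
      exact key _ _ _ _ _ harc01 harc12 harc23 harc30 harcg harca harcc
    omega

end MinHomHstar
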